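/- arXiv:0801.4432 — 4 statements merged into one kernel-verified Lean document; each statement's English description precedes it below -/
import Mathlib

section
/- Let P ⊂ ℝⁿ be a simplex with vertices v₀,…,v_d, and let t ≥ 0 be an integer. For j ∈ {0,…,d} define Q_j = (t+d)·P + v_j (the dilate of P by t+d translated by v_j). Then the union ⋃_{j=0}^{d} Q_j equals (t+d+1)·P. -/
open Pointwise

theorem stmt8 (n d : ℕ) (v : Fin (d + 1) → (Fin n → ℝ)) (hv : AffineIndependent ℝ v)
    (t : ℕ) :
    (⋃ j, v j +ᵥ (((t : ℝ) + d) • convexHull ℝ (Set.range v))) =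
      ((t : ℝ) + d + 1) • convexHull ℝ (Set.range v) := by
  set s : ℝ := (t : ℝ) + d with hs
  set P := convexHull ℝ (Set.range v) with hP
  have hs0 : 0 ≤ s := by positivity
  have hs1 : (0:ℝ) < s + 1 := by linarith
  apply Set.Subset.antisymm
  · rintro x hx
    simp only [Set.mem_iUnion] at hx
    obtain ⟨j, y, hy, rfl⟩ := hx
    obtain ⟨p, hp, rfl⟩ := hy
    have hmem : (s+1)⁻¹ • v j + (s * (s+1)⁻¹) • p ∈ P := by
      refine (convex_convexHull ℝ _) (subset_convexHull ℝ (Set.range v) (Set.mem_range_self j)) hp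
        (by positivity) (by positivity) ?_
      field_simp
      ring
    have heq : (s + 1) • ((s+1)⁻¹ • v j + (s * (s+1)⁻¹) • p) = v j +ᵥ s • p := by
      simp only [vadd_eq_add]
      match_scalars <;> field_simp
    exact Set.mem_smul_set.2 ⟨_, hmem, heq⟩
  · rintro x hx
    obtain ⟨p, hp, rfl⟩ := Set.mem_smul_set.1 hx
    rw [hP, convexHull_range_eq_exists_affineCombination] at hp
    obtain ⟨F, w, hw0, hw1, hcomb⟩ := hp
    set W : Fin (d+1) → ℝ := fun i => if i ∈ F then w i else 0 with hW
    have hW0 : ∀ i, 0 ≤ W i := by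
      intro i; simp only [hW]; split
      · exact hw0 _ ‹_›
      · exact le_rfl
    have hW1 : ∑ i, W i = 1 := by
      rw [hW]; rw [Finset.sum_ite_mem, Finset.univ_inter, hw1]
    have hpW : p = ∑ i, W i • v i := by
      rw [← hcomb, Finset.affineCombination_eq_linear_combination F v w hw1]
      rw [← Finset.sum_subset (Finset.subset_univ F)
        (fun i _ hi => by simp [hW, hi])]
      exact Finset.sum_congr rfl (fun i hi => by simp [hW, hi])
    obtain ⟨j, -, hjmax⟩ := Finset.exists_max_image Finset.univ W ⟨0, Finset.mem_univ 0⟩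
    have hjge : (1:ℝ) ≤ (d+1) * W j := by
      calc (1:ℝ) = ∑ i, W i := hW1.symm
        _ ≤ ∑ _i : Fin (d+1), W j :=
            Finset.sum_le_sum (fun i _ => hjmax i (Finset.mem_univ i))
        _ = (d+1) * W j := by
            rw [Finset.sum_const, Finset.card_univ, Fintype.card_fin, nsmul_eq_mul]
            push_cast; ring
    have hds : (d : ℝ) + 1 ≤ s + 1 := by
      simp only [hs]; linarith [Nat.cast_nonneg (α := ℝ) t]
    have hWj : 1 ≤ (s+1) * W j := by
      have h0 : 0 ≤ W j := hW0 j
      nlinarith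
    simp only [Set.mem_iUnion]
    rcases eq_or_lt_of_le hs0 with hz | hpos
    · -- s = 0, hence t = 0 and d = 0
      have hd : (d:ℝ) = 0 := by
        have ht : (0:ℝ) ≤ (t:ℝ) := Nat.cast_nonneg t
        have hd' : (0:ℝ) ≤ (d:ℝ) := Nat.cast_nonneg d
        nlinarith [hz]
      have hd0 : d = 0 := by exact_mod_cast hd
      subst hd0
      have hp0 : p = v 0 := by
        rw [hpW]
        rw [Fin.sum_univ_one]
        have : W 0 = 1 := by rw [← hW1, Fin.sum_univ_one]
        rw [this, one_smul]
      refine ⟨0, 0, ?_, ?_⟩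
      · rw [← hz, Set.zero_smul_set (⟨v 0, subset_convexHull ℝ (Set.range v) (Set.mem_range_self 0)⟩ : P.Nonempty)]
        rfl
      · simp only [vadd_eq_add, add_zero, hp0, ← hz]
        norm_num
    · -- s > 0
      set μ : Fin (d+1) → ℝ := fun i => ((s+1) * W i - if i = j then 1 else 0) / s with hμ
      have hμ0 : ∀ i, 0 ≤ μ i := by
        intro i
        apply div_nonneg _ hpos.le
        rcases eq_or_ne i j with rfl | hij
        · rw [if_pos rfl]; linarith
        · simp only [if_neg hij]; have := hW0 i; nlinarith
      have hμ1 : ∑ i, μ i = 1 := by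
        simp only [hμ]
        rw [← Finset.sum_div, Finset.sum_sub_distrib, ← Finset.mul_sum, hW1,
          Finset.sum_ite_eq' Finset.univ j (fun _ => (1:ℝ))]
        simp [hpos.ne']
      have hqP : ∑ i, μ i • v i ∈ P := by
        rw [hP]
        have := Finset.centerMass_mem_convexHull (s := Set.range v)
          (Finset.univ : Finset (Fin (d+1)))
          (fun i _ => hμ0 i) (by rw [hμ1]; norm_num)
          (fun i _ => Set.mem_range_self i)
        rwa [Finset.centerMass_eq_of_sum_1 _ _ hμ1] at this
      have key : s • ∑ i, μ i • v i = (s+1) • p - v j := by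
        rw [Finset.smul_sum]
        have h1 : ∀ i ∈ Finset.univ, s • μ i • v i
            = ((s+1) * W i) • v i - (if i = j then (1:ℝ) else 0) • v i := by
          intro i _
          rw [smul_smul, ← sub_smul]
          congr 1
          simp only [hμ]
          field_simp
        rw [Finset.sum_congr rfl h1, Finset.sum_sub_distrib]
        congr 1
        · rw [hpW, Finset.smul_sum]
          exact Finset.sum_congr rfl (fun i _ => by rw [smul_smul])
        · simp [ite_smul, Finset.sum_ite_eq']
      refine ⟨j, s • ∑ i, μ i • v i, Set.mem_smul_set.2 ⟨_, hqP, rfl⟩, ?_⟩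
      show v j + s • ∑ i, μ i • v i = (s+1) • p
      rw [key]
      abel
end

section
/- Let P ⊂ ℝⁿ be a simplex with vertices v₀,…,v_d, let t ≥ 0 be an integer, and for j define Q_j = (t+d)·P + v_j. Then for any nonempty subset I ⊆ {0,…,d}, the intersection ⋂_{i∈I} Q_i equals (t+d+1−|I|)·P + ∑_{i∈I} v_i. -/
open Pointwise

private lemma rep_unique {n d : ℕ} {v : Fin (d + 1) → (Fin n → ℝ)}
    (hv : AffineIndependent ℝ v) {a b : Fin (d + 1) → ℝ}
    (hs : ∑ j, a j = ∑ j, b j) (hx : ∑ j, a j • v j = ∑ j, b j • v j) : a = b := by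
  rw [affineIndependent_iff] at hv
  funext j
  have h := hv Finset.univ (fun k => a k - b k)
    (by simp [Finset.sum_sub_distrib, hs])
    (by simp [sub_smul, Finset.sum_sub_distrib, hx]) j (Finset.mem_univ j)
  have : a j - b j = 0 := h
  linarith

private lemma hull_eq {n d : ℕ} (v : Fin (d + 1) → (Fin n → ℝ)) :
    convexHull ℝ (Set.range v) =
      {x | ∃ a : Fin (d + 1) → ℝ, (∀ j, 0 ≤ a j) ∧ ∑ j, a j = 1 ∧ ∑ j, a j • v j = x} := by
  apply Set.Subset.antisymm
  · apply convexHull_min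
    · rintro x ⟨i, rfl⟩
      exact ⟨fun j => if j = i then 1 else 0,
        fun j => by dsimp only; split <;> norm_num, by simp, by simp [ite_smul]⟩
    · rintro x ⟨a, ha, hsa, hxa⟩ y ⟨b, hb, hsb, hxb⟩ p q hp hq hpq
      refine ⟨fun j => p * a j + q * b j,
        fun j => add_nonneg (mul_nonneg hp (ha j)) (mul_nonneg hq (hb j)), ?_, ?_⟩
      · simp [Finset.sum_add_distrib, ← Finset.mul_sum, hsa, hsb, hpq]
      · simp [add_smul, mul_smul, Finset.sum_add_distrib, ← Finset.smul_sum, hxa, hxb]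
  · rintro x ⟨a, ha, hsa, rfl⟩
    exact (convex_convexHull ℝ _).sum_mem (fun i _ => ha i) hsa
      (fun i _ => subset_convexHull ℝ _ (Set.mem_range_self i))

private lemma smul_hull_eq {n d : ℕ} (v : Fin (d + 1) → (Fin n → ℝ)) {s : ℝ} (hs : 0 ≤ s) :
    s • convexHull ℝ (Set.range v) =
      {x | ∃ a : Fin (d + 1) → ℝ, (∀ j, 0 ≤ a j) ∧ ∑ j, a j = s ∧ ∑ j, a j • v j = x} := by
  rcases eq_or_lt_of_le hs with rfl | hs'
  · rw [Set.zero_smul_set ⟨v 0, subset_convexHull ℝ _ (Set.mem_range_self 0)⟩]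
    ext x
    simp only [Set.mem_zero, Set.mem_setOf_eq]
    constructor
    · rintro rfl
      exact ⟨fun _ => 0, fun j => le_refl 0, by simp, by simp⟩
    · rintro ⟨a, ha, hsa, rfl⟩
      have : ∀ j ∈ Finset.univ, a j = 0 :=
        (Finset.sum_eq_zero_iff_of_nonneg (fun j _ => ha j)).mp hsa
      exact Finset.sum_eq_zero fun j _ => by rw [this j (Finset.mem_univ j), zero_smul]
  · ext x
    rw [Set.mem_smul_set]
    constructor
    · rintro ⟨y, hy, rfl⟩
      rw [hull_eq] at hy
      obtain ⟨a, ha, hsa, hxa⟩ := hy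
      refine ⟨fun j => s * a j, fun j => mul_nonneg hs (ha j), ?_, ?_⟩
      · rw [← Finset.mul_sum, hsa, mul_one]
      · simp only [mul_smul, ← Finset.smul_sum, hxa]
    · rintro ⟨a, ha, hsa, rfl⟩
      refine ⟨∑ j, (s⁻¹ * a j) • v j, ?_, ?_⟩
      · rw [hull_eq]
        exact ⟨fun j => s⁻¹ * a j, fun j => mul_nonneg (inv_nonneg.mpr hs) (ha j),
          by rw [← Finset.mul_sum, hsa, inv_mul_cancel₀ hs'.ne'], rfl⟩
      · rw [Finset.smul_sum]
        refine Finset.sum_congr rfl fun j _ => ?_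
        rw [smul_smul, ← mul_assoc, mul_inv_cancel₀ hs'.ne', one_mul]

theorem stmt9 (n d : ℕ) (v : Fin (d + 1) → (Fin n → ℝ)) (hv : AffineIndependent ℝ v)
    (t : ℕ) (I : Finset (Fin (d + 1))) (hI : I.Nonempty) :
    (⋂ i ∈ I, v i +ᵥ (((t : ℝ) + d) • convexHull ℝ (Set.range v))) =
      (∑ i ∈ I, v i) +ᵥ
        (((t : ℝ) + d + 1 - I.card) • convexHull ℝ (Set.range v)) := by
  have hcardn : I.card ≤ d + 1 := by
    simpa using Finset.card_le_univ I
  have hcard : (I.card : ℝ) ≤ (d : ℝ) + 1 := by exact_mod_cast hcardn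
  have h1 : (0:ℝ) ≤ (t : ℝ) + d := by positivity
  have h2 : (0:ℝ) ≤ (t : ℝ) + d + 1 - I.card := by
    have : (0:ℝ) ≤ (t : ℝ) := Nat.cast_nonneg t
    linarith
  have hite : ∀ i : Fin (d + 1), ∑ j, (if j = i then (1:ℝ) else 0) • v j = v i := by
    intro i; simp [ite_smul]
  have hites : ∀ i : Fin (d + 1), ∑ j, (if j = i then (1:ℝ) else 0) = 1 := by
    intro i; simp
  have hIsum : ∑ j, (if j ∈ I then (1:ℝ) else 0) = I.card := by
    rw [Finset.sum_ite_mem, Finset.univ_inter]; simp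
  have hIv : ∑ j, (if j ∈ I then (1:ℝ) else 0) • v j = ∑ i ∈ I, v i := by
    simp only [ite_smul, one_smul, zero_smul]
    rw [Finset.sum_ite_mem, Finset.univ_inter]
  ext x
  simp only [Set.mem_iInter, Set.mem_vadd_set_iff_neg_vadd_mem, vadd_eq_add,
    smul_hull_eq v h1, smul_hull_eq v h2, Set.mem_setOf_eq]
  constructor
  · intro h
    obtain ⟨i₀, hi₀⟩ := hI
    obtain ⟨a₀, ha₀, hsa₀, hxa₀⟩ := h i₀ hi₀
    set c : Fin (d + 1) → ℝ := fun j => a₀ j + if j = i₀ then 1 else 0 with hc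
    have hc0 : ∀ j, 0 ≤ c j := by
      intro j
      simp only [hc]
      have h0 : (0:ℝ) ≤ if j = i₀ then 1 else 0 := by split <;> norm_num
      linarith [ha₀ j]
    have hcs : ∑ j, c j = (t : ℝ) + d + 1 := by
      rw [hc, Finset.sum_add_distrib, hsa₀, hites]
    have hcx : ∑ j, c j • v j = x := by
      rw [hc]
      simp only [add_smul, Finset.sum_add_distrib, hxa₀, hite]
      abel
    have hc1 : ∀ i ∈ I, 1 ≤ c i := by
      intro i hi
      obtain ⟨a, ha, hsa, hxa⟩ := h i hi
      have hcc : c = fun j => a j + if j = i then 1 else 0 := by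
        apply rep_unique hv
        · rw [hcs, Finset.sum_add_distrib, hsa, hites]
        · rw [hcx]
          simp only [add_smul, Finset.sum_add_distrib, hxa, hite]
          abel
      have := congrFun hcc i
      norm_num at this
      rw [this]
      linarith [ha i]
    refine ⟨fun j => c j - if j ∈ I then 1 else 0, fun j => ?_, ?_, ?_⟩
    · by_cases hj : j ∈ I
      · simp only [if_pos hj]; linarith [hc1 j hj]
      · simp only [if_neg hj, sub_zero]; exact hc0 j
    · rw [Finset.sum_sub_distrib, hcs, hIsum]
    · simp only [sub_smul, Finset.sum_sub_distrib, hcx, hIv]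
      abel
  · rintro ⟨b, hb, hsb, hxb⟩ i hi
    refine ⟨fun j => b j + (if j ∈ I then 1 else 0) - (if j = i then 1 else 0),
      fun j => ?_, ?_, ?_⟩
    · by_cases hj : j = i
      · subst hj
        simp only [if_pos hi]
        norm_num
        linarith [hb j]
      · simp only [if_neg hj, sub_zero]
        have h0 : (0:ℝ) ≤ if j ∈ I then 1 else 0 := by split <;> norm_num
        linarith [hb j]
    · rw [Finset.sum_sub_distrib, Finset.sum_add_distrib, hsb, hIsum, hites]
      ring
    · simp only [sub_smul, add_smul, Finset.sum_sub_distrib, Finset.sum_add_distrib,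
        hxb, hIv, hite]
      abel
end

section
/- Let P ⊂ ℝⁿ be an integral simplex of dimension d with vertices v₀,…,v_d. Define ℓ_P(t) = #(t·P ∩ ℤⁿ) for t > 0 and ℓ_P(0) = 1. Then for all integers t ≥ 0, ℓ_P(t+d+1) = ∑_{k=0}^{d} (−1)^{d−k} C(d+1,k) ℓ_P(t+k). -/
open Pointwise

/-- Number of lattice points of a subset of `ℝⁿ`. -/
noncomputable def latticeCount {n : ℕ} (S : Set (Fin n → ℝ)) : ℕ :=
  Set.ncard {x ∈ S | ∀ i, ∃ m : ℤ, x i = m}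

open Finset fwdDiff


lemma aux_card_adt : ∀ (k m : ℕ),
    (Finset.Nat.antidiagonalTuple (k + 1) m).card = (m + k).choose k := by
  intro k
  induction k with
  | zero => intro m; simp
  | succ k ih =>
    intro m
    have hdecomp : Finset.Nat.antidiagonalTuple (k + 2) m =
        (Finset.HasAntidiagonal.antidiagonal m).biUnion
          (fun p => (Finset.Nat.antidiagonalTuple (k + 1) p.2).map
            ⟨Fin.cons (α := fun _ => ℕ) p.1, Fin.cons_right_injective (α := fun _ => ℕ) p.1⟩) := by
      ext x
      simp only [Finset.Nat.mem_antidiagonalTuple, Finset.mem_biUnion, Finset.mem_map,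
        Finset.HasAntidiagonal.mem_antidiagonal, Function.Embedding.coeFn_mk, Prod.exists]
      constructor
      · rintro rfl
        refine ⟨x 0, ∑ i : Fin (k + 1), x (Fin.succ i), (Fin.sum_univ_succ x).symm,
          Fin.tail x, rfl, Fin.cons_self_tail x⟩
      · rintro ⟨i, j, hij, y, hy, rfl⟩
        rw [Fin.sum_cons]
        omega
    have hdisj : ∀ p ∈ Finset.HasAntidiagonal.antidiagonal m, ∀ q ∈ Finset.HasAntidiagonal.antidiagonal m, p ≠ q →
        Disjoint ((Finset.Nat.antidiagonalTuple (k + 1) p.2).map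
            ⟨Fin.cons (α := fun _ => ℕ) p.1, Fin.cons_right_injective (α := fun _ => ℕ) p.1⟩)
          ((Finset.Nat.antidiagonalTuple (k + 1) q.2).map
            ⟨Fin.cons (α := fun _ => ℕ) q.1, Fin.cons_right_injective (α := fun _ => ℕ) q.1⟩) := by
      intro p hp q hq hpq
      rw [Finset.disjoint_left]
      rintro x hx hx'
      simp only [Finset.mem_map, Function.Embedding.coeFn_mk] at hx hx'
      obtain ⟨y, hy, rfl⟩ := hx
      obtain ⟨z, hz, hzz⟩ := hx'
      rw [Fin.cons_inj] at hzz
      obtain ⟨h1, h2⟩ := hzz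
      subst h2
      rw [Finset.Nat.mem_antidiagonalTuple] at hy hz
      apply hpq
      ext
      · exact h1.symm
      · rw [← hy, ← hz]
    rw [hdecomp, Finset.card_biUnion hdisj]
    simp only [Finset.card_map, ih]
    rw [Finset.Nat.sum_antidiagonal_eq_sum_range_succ_mk]
    have h2 : ∑ i ∈ Finset.range (m + 1), ((m - i) + k).choose k
        = ∑ i ∈ Finset.range (m + 1), ((m - (m - i)) + k).choose k := by
      rw [← Finset.sum_range_reflect]
      apply Finset.sum_congr rfl
      intro i hi
      rw [Finset.mem_range] at hi
      have h4 : m + 1 - 1 - i = m - i := by omega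
      rw [h4]
    rw [h2]
    have h3 : ∑ i ∈ Finset.range (m + 1), ((m - (m - i)) + k).choose k
        = ∑ i ∈ Finset.range (m + 1), (i + k).choose k := by
      apply Finset.sum_congr rfl
      intro i hi
      rw [Finset.mem_range] at hi
      have h5 : m - (m - i) = i := by omega
      rw [h5]
    rw [h3, Nat.sum_range_add_choose]
    congr 1 <;> omega

section Geo

variable {n d : ℕ} (v : Fin (d + 1) → (Fin n → ℝ))

/-- membership in a positive dilate of the hull -/
lemma aux_mem_smul_hull {t : ℝ} (ht : 0 < t) (x : Fin n → ℝ) :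
    x ∈ t • convexHull ℝ (Set.range v) ↔
      ∃ lam : Fin (d + 1) → ℝ, (∀ j, 0 ≤ lam j) ∧ ∑ j, lam j = t ∧ ∑ j, lam j • v j = x := by
  rw [Set.mem_smul_set]
  constructor
  · rintro ⟨y, hy, rfl⟩
    rw [convexHull_range_eq_exists_affineCombination] at hy
    obtain ⟨s, w, hw0, hw1, rfl⟩ := hy
    refine ⟨fun j => if j ∈ s then t * w j else 0, ?_, ?_, ?_⟩
    · intro j
      by_cases hj : j ∈ s <;> simp [hj]
      exact mul_nonneg ht.le (hw0 j hj)
    · rw [Finset.sum_ite_mem, Finset.univ_inter, ← Finset.mul_sum, hw1, mul_one]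
    · rw [Finset.affineCombination_eq_linear_combination _ _ _ hw1, Finset.smul_sum]
      have he : ∀ j ∈ Finset.univ, (fun j => if j ∈ s then t * w j else 0) j • v j
          = if j ∈ s then t • (w j • v j) else 0 := by
        intro j _
        by_cases hj : j ∈ s <;> simp [hj, smul_smul]
      rw [Finset.sum_congr rfl he, Finset.sum_ite_mem, Finset.univ_inter]
  · rintro ⟨lam, h0, h1, rfl⟩
    refine ⟨∑ j, (lam j / t) • v j, ?_, ?_⟩
    · rw [convexHull_range_eq_exists_affineCombination]
      refine ⟨Finset.univ, fun j => lam j / t, fun j _ => div_nonneg (h0 j) ht.le, ?_, ?_⟩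
      · rw [← Finset.sum_div, h1, div_self ht.ne']
      · rw [Finset.affineCombination_eq_linear_combination]
        rw [← Finset.sum_div, h1, div_self ht.ne']
    · rw [Finset.smul_sum]
      apply Finset.sum_congr rfl
      intro j _
      rw [smul_smul, mul_div_cancel₀ _ ht.ne']

end Geo

lemma aux_lat_finite {n : ℕ} (M : ℝ) :
    {x : Fin n → ℝ | (∀ i, |x i| ≤ M) ∧ ∀ i, ∃ m : ℤ, x i = m}.Finite := by
  have hsub : {x : Fin n → ℝ | (∀ i, |x i| ≤ M) ∧ ∀ i, ∃ m : ℤ, x i = m} ⊆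
      (fun g : Fin n → ℤ => fun i => (g i : ℝ)) ''
        (Set.pi Set.univ fun _ : Fin n => Set.Icc (-⌈M⌉) ⌈M⌉) := by
    rintro x ⟨hb, hl⟩
    refine ⟨fun i => (hl i).choose, ?_, ?_⟩
    · intro i _
      have hx : x i = ((hl i).choose : ℝ) := (hl i).choose_spec
      have h1 : |((hl i).choose : ℝ)| ≤ M := hx ▸ hb i
      have h2 : M ≤ (⌈M⌉ : ℝ) := Int.le_ceil M
      rw [abs_le] at h1
      constructor
      · exact_mod_cast le_trans (neg_le_neg h2) h1.1
      · exact_mod_cast le_trans h1.2 h2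
    · funext i
      exact ((hl i).choose_spec).symm
  exact Set.Finite.subset
    (Set.Finite.image _ (Set.Finite.pi fun _ => Set.finite_Icc _ _)) hsub

lemma aux_count (n d : ℕ) (v : Fin (d + 1) → (Fin n → ℝ))
    (hv : AffineIndependent ℝ v) (hint : ∀ j i, ∃ m : ℤ, v j i = m) :
    ∃ (B : Finset (Fin (d + 1) → ℝ)) (h : (Fin (d + 1) → ℝ) → ℕ),
      (∀ μ ∈ B, h μ ≤ d) ∧
      (∀ t : ℕ, 0 < t →
        latticeCount ((t : ℝ) • convexHull ℝ (Set.range v)) =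
          ∑ μ ∈ B, (t + d - h μ).choose d) ∧
      (∑ μ ∈ B, (d - h μ).choose d = 1) := by
  classical
  obtain ⟨Mv, hMv⟩ : ∃ Mv : Fin (d + 1) → Fin n → ℤ, ∀ j i, v j i = Mv j i :=
    ⟨fun j i => (hint j i).choose, fun j i => (hint j i).choose_spec⟩
  -- integer combinations of the vertices are lattice points
  have latCombo : ∀ c : Fin (d + 1) → ℤ, ∀ i, ∃ m : ℤ, (∑ j, (c j : ℝ) • v j) i = m := by
    intro c i
    refine ⟨∑ j, c j * Mv j i, ?_⟩
    rw [Finset.sum_apply]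
    push_cast
    refine Finset.sum_congr rfl fun j _ => ?_
    rw [Pi.smul_apply, smul_eq_mul, hMv j i]
  -- uniqueness of weights
  have uniq : ∀ lam mu : Fin (d + 1) → ℝ, ∑ j, lam j = ∑ j, mu j →
      ∑ j, lam j • v j = ∑ j, mu j • v j → lam = mu := by
    intro lam mu h1 h2
    funext j
    exact hv.eq_of_sum_eq_sum h1 h2 j (Finset.mem_univ j)
  -- the half-open box
  set Box : Set (Fin (d + 1) → ℝ) := {μ | (∀ j, 0 ≤ μ j ∧ μ j < 1) ∧
    (∃ z : ℤ, ∑ j, μ j = (z : ℝ)) ∧ ∀ i, ∃ m : ℤ, (∑ j, μ j • v j) i = m} with hBoxdef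
  have hBoxFin : Box.Finite := by
    set F : (Fin (d + 1) → ℝ) → (Fin n → ℝ) × ℝ := fun μ => (∑ j, μ j • v j, ∑ j, μ j) with hF
    have hinj : Set.InjOn F Box := by
      intro a ha b hb hab
      rw [Prod.ext_iff] at hab
      exact uniq a b hab.2 hab.1
    apply Set.Finite.of_finite_image ?_ hinj
    apply Set.Finite.subset (Set.Finite.prod (aux_lat_finite (∑ j, ‖v j‖))
      ((Set.finite_Icc (0 : ℤ) (d + 1)).image (fun z : ℤ => (z : ℝ))))
    rintro _ ⟨μ, hμ, rfl⟩
    obtain ⟨hb, ⟨z, hz⟩, hl⟩ := hμ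
    simp only [hF, Set.mem_prod, Set.mem_setOf_eq]
    constructor
    · refine ⟨fun i => ?_, hl⟩
      rw [Finset.sum_apply]
      refine le_trans (Finset.abs_sum_le_sum_abs _ _) (Finset.sum_le_sum fun j _ => ?_)
      rw [Pi.smul_apply, smul_eq_mul, abs_mul, abs_of_nonneg (hb j).1]
      calc μ j * |v j i| ≤ 1 * |v j i| :=
            mul_le_mul_of_nonneg_right (hb j).2.le (abs_nonneg _)
        _ = |v j i| := one_mul _
        _ ≤ ‖v j‖ := by rw [← Real.norm_eq_abs]; exact norm_le_pi_norm (v j) i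
    · refine ⟨z, ?_, hz.symm⟩
      have h0 : (0 : ℝ) ≤ ∑ j, μ j := Finset.sum_nonneg fun j _ => (hb j).1
      have h1 : ∑ j, μ j ≤ ((d : ℝ) + 1) := by
        calc ∑ j, μ j ≤ ∑ _j : Fin (d + 1), (1 : ℝ) :=
              Finset.sum_le_sum fun j _ => (hb j).2.le
          _ = ((d : ℝ) + 1) := by simp [Finset.card_univ]
      rw [hz] at h0 h1
      constructor
      · exact_mod_cast h0
      · exact_mod_cast h1
  set B : Finset (Fin (d + 1) → ℝ) := hBoxFin.toFinset with hB
  set hgt : (Fin (d + 1) → ℝ) → ℕ := fun μ => (⌊∑ j, μ j⌋).toNat with hhgt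
  have hmemB : ∀ μ, μ ∈ B ↔ μ ∈ Box := fun μ => Set.Finite.mem_toFinset _
  have hgtcast : ∀ μ ∈ B, ((hgt μ : ℝ)) = ∑ j, μ j := by
    intro μ hμ
    obtain ⟨hb, ⟨z, hz⟩, -⟩ := (hmemB μ).1 hμ
    have hz0 : 0 ≤ z := by
      have : (0 : ℝ) ≤ (z : ℝ) := hz ▸ Finset.sum_nonneg fun j _ => (hb j).1
      exact_mod_cast this
    rw [hhgt]
    simp only [hz, Int.floor_intCast]
    exact_mod_cast congrArg (fun w : ℤ => (w : ℝ)) (Int.toNat_of_nonneg hz0)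
  have hgtle : ∀ μ ∈ B, hgt μ ≤ d := by
    intro μ hμ
    obtain ⟨hb, -, -⟩ := (hmemB μ).1 hμ
    have hlt : ∑ j, μ j < ((d : ℝ) + 1) := by
      calc ∑ j, μ j < ∑ _j : Fin (d + 1), (1 : ℝ) :=
            Finset.sum_lt_sum_of_nonempty Finset.univ_nonempty fun j _ => (hb j).2
        _ = ((d : ℝ) + 1) := by simp [Finset.card_univ]
    have : ((hgt μ : ℝ)) < ((d : ℝ) + 1) := (hgtcast μ hμ) ▸ hlt
    have : (hgt μ) < d + 1 := by exact_mod_cast this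
    omega
  refine ⟨B, hgt, hgtle, ?_, ?_⟩
  · intro t ht
    have ht' : (0 : ℝ) < (t : ℝ) := by exact_mod_cast ht
    set ψ : (Σ _ : Fin (d + 1) → ℝ, Fin (d + 1) → ℕ) → (Fin n → ℝ) :=
      fun p => ∑ j, (p.1 j + (p.2 j : ℝ)) • v j with hψ
    set P : Finset (Σ _ : Fin (d + 1) → ℝ, Fin (d + 1) → ℕ) :=
      (B.filter fun μ => hgt μ ≤ t).sigma
        (fun μ => Finset.Nat.antidiagonalTuple (d + 1) (t - hgt μ)) with hP
    have hPmem : ∀ p : (Σ _ : Fin (d + 1) → ℝ, Fin (d + 1) → ℕ), p ∈ P ↔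
        (p.1 ∈ B ∧ hgt p.1 ≤ t ∧ ∑ j, p.2 j = t - hgt p.1) := by
      intro p
      rw [hP, Finset.mem_sigma, Finset.mem_filter, Finset.Nat.mem_antidiagonalTuple]
      tauto
    have hwsum : ∀ p ∈ P, ∑ j, (p.1 j + (p.2 j : ℝ)) = (t : ℝ) := by
      intro p hp
      obtain ⟨h1, h2, h3⟩ := (hPmem p).1 hp
      rw [Finset.sum_add_distrib, ← hgtcast p.1 h1]
      have h4 : ∑ j, ((p.2 j : ℝ)) = ((∑ j, p.2 j : ℕ) : ℝ) := by push_cast; rfl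
      rw [h4, h3, Nat.cast_sub h2]
      ring
    have hAeq : {x ∈ (t : ℝ) • convexHull ℝ (Set.range v) | ∀ i, ∃ m : ℤ, x i = m}
        = ψ '' ↑P := by
      apply Set.Subset.antisymm
      · rintro x ⟨hx1, hx2⟩
        rw [aux_mem_smul_hull v ht' x] at hx1
        obtain ⟨lam, h0, h1, h2⟩ := hx1
        set a : Fin (d + 1) → ℕ := fun j => (⌊lam j⌋).toNat with ha
        have hacast : ∀ j, ((a j : ℝ)) = ((⌊lam j⌋ : ℤ) : ℝ) := by
          intro j
          rw [ha]
          exact_mod_cast congrArg (fun w : ℤ => (w : ℝ))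
            (Int.toNat_of_nonneg (Int.floor_nonneg.mpr (h0 j)))
        set μ : Fin (d + 1) → ℝ := fun j => lam j - (a j : ℝ) with hμ
        have hfract : ∀ j, μ j = Int.fract (lam j) := by
          intro j
          rw [hμ]
          dsimp only
          rw [hacast j, Int.fract]
        have hbnds : ∀ j, 0 ≤ μ j ∧ μ j < 1 := fun j => by
          rw [hfract j]; exact ⟨Int.fract_nonneg _, Int.fract_lt_one _⟩
        have hsplit : ∑ j, μ j • v j = (∑ j, lam j • v j) - ∑ j, (a j : ℝ) • v j := by
          rw [← Finset.sum_sub_distrib]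
          exact Finset.sum_congr rfl fun j _ => by rw [hμ]; dsimp only; rw [sub_smul]
        have hμsumr : ∑ j, μ j = (t : ℝ) - ((∑ j, a j : ℕ) : ℝ) := by
          rw [hμ]
          dsimp only
          rw [Finset.sum_sub_distrib, h1]
          push_cast
          ring
        have hμBox : μ ∈ Box := by
          refine ⟨hbnds, ⟨(t : ℤ) - ((∑ j, a j : ℕ) : ℤ), by rw [hμsumr]; push_cast; ring⟩, ?_⟩
          intro i
          obtain ⟨m1, hm1⟩ := hx2 i
          obtain ⟨m2, hm2⟩ := latCombo (fun j => ((a j : ℕ) : ℤ)) i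
          simp only [Int.cast_natCast] at hm2
          refine ⟨m1 - m2, ?_⟩
          rw [hsplit, h2, Pi.sub_apply, hm1, hm2]
          push_cast
          ring
        have hμB : μ ∈ B := (hmemB μ).2 hμBox
        have hsle : (∑ j, a j) ≤ t := by
          have h0' : (0 : ℝ) ≤ ∑ j, μ j := Finset.sum_nonneg fun j _ => (hbnds j).1
          rw [hμsumr] at h0'
          have h5 : ((∑ j, a j : ℕ) : ℝ) ≤ (t : ℝ) := by linarith
          exact_mod_cast h5
        have hgtval : hgt μ = t - ∑ j, a j := by
          have h6 := hgtcast μ hμB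
          rw [hμsumr, ← Nat.cast_sub hsle] at h6
          exact_mod_cast h6
        refine ⟨⟨μ, a⟩, ?_, ?_⟩
        · rw [Finset.mem_coe, hPmem]
          dsimp only
          refine ⟨hμB, by omega, by omega⟩
        · rw [hψ]
          dsimp only
          rw [← h2]
          exact Finset.sum_congr rfl fun j _ => by rw [hμ]; dsimp only; rw [sub_add_cancel]
      · rintro _ ⟨p, hp, rfl⟩
        rw [Finset.mem_coe] at hp
        obtain ⟨h1, h2, h3⟩ := (hPmem p).1 hp
        obtain ⟨hb1, -, hl1⟩ := (hmemB p.1).1 h1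
        constructor
        · rw [aux_mem_smul_hull v ht']
          exact ⟨fun j => p.1 j + (p.2 j : ℝ),
            fun j => add_nonneg (hb1 j).1 (Nat.cast_nonneg _), hwsum p hp, rfl⟩
        · intro i
          obtain ⟨m1, hm1⟩ := hl1 i
          obtain ⟨m2, hm2⟩ := latCombo (fun j => ((p.2 j : ℕ) : ℤ)) i
          simp only [Int.cast_natCast] at hm2
          refine ⟨m1 + m2, ?_⟩
          have hsplit2 : ψ p = (∑ j, p.1 j • v j) + ∑ j, ((p.2 j : ℝ)) • v j := by
            rw [hψ]
            dsimp only
            rw [← Finset.sum_add_distrib]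
            exact Finset.sum_congr rfl fun j _ => add_smul _ _ _
          rw [hsplit2, Pi.add_apply, hm1, hm2]
          push_cast
          ring
    have hinjψ : Set.InjOn ψ ↑P := by
      rintro ⟨p1, p2⟩ hp ⟨q1, q2⟩ hq hpq
      rw [Finset.mem_coe] at hp hq
      have hsump := hwsum _ hp
      have hsumq := hwsum _ hq
      have hlameq : (fun j => p1 j + (p2 j : ℝ)) = fun j => q1 j + (q2 j : ℝ) := by
        apply uniq
        · rw [hsump, hsumq]
        · exact hpq
      obtain ⟨hbp, -, -⟩ := (hmemB p1).1 ((hPmem _).1 hp).1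
      obtain ⟨hbq, -, -⟩ := (hmemB q1).1 ((hPmem _).1 hq).1
      have hcomp : ∀ j, p2 j = q2 j ∧ p1 j = q1 j := by
        intro j
        have he : p1 j + (p2 j : ℝ) = q1 j + (q2 j : ℝ) := by
          simpa using congrFun hlameq j
        have hk : (((p2 j : ℤ) - (q2 j : ℤ) : ℤ) : ℝ) = q1 j - p1 j := by
          push_cast
          linarith
        have habs : |(((p2 j : ℤ) - (q2 j : ℤ) : ℤ) : ℝ)| < 1 := by
          rw [hk, abs_lt]
          constructor
          · have h11 := (hbq j).1
            have h12 := (hbp j).2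
            linarith
          · have h13 := (hbq j).2
            have h14 := (hbp j).1
            linarith
        have hz : ((p2 j : ℤ) - (q2 j : ℤ) : ℤ) = 0 := by
          have h15 : |((p2 j : ℤ) - (q2 j : ℤ) : ℤ)| < 1 := by exact_mod_cast habs
          rw [abs_lt] at h15
          omega
        have hp2q2 : p2 j = q2 j := by omega
        refine ⟨hp2q2, ?_⟩
        rw [hp2q2] at he
        linarith
      have e1 : p1 = q1 := funext fun j => (hcomp j).2
      have e2 : p2 = q2 := funext fun j => (hcomp j).1
      subst e1
      subst e2
      rfl
    unfold latticeCount
    rw [hAeq, Set.ncard_image_of_injOn hinjψ, Set.ncard_coe_finset, hP,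
      Finset.card_sigma]
    have hc1 : ∀ μ ∈ B.filter (fun μ => hgt μ ≤ t),
        (Finset.Nat.antidiagonalTuple (d + 1) (t - hgt μ)).card = (t + d - hgt μ).choose d := by
      intro μ hμ
      rw [Finset.mem_filter] at hμ
      rw [aux_card_adt d (t - hgt μ)]
      congr 1
      omega
    rw [Finset.sum_congr rfl hc1]
    apply Finset.sum_subset (Finset.filter_subset _ _)
    intro μ hμ hnot
    rw [Finset.mem_filter, not_and] at hnot
    have h7 : ¬ hgt μ ≤ t := hnot hμ
    have h8 := hgtle μ hμ
    exact Nat.choose_eq_zero_of_lt (by omega)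
  · -- value at t = 0
    have hterm : ∀ μ ∈ B, (d - hgt μ).choose d = if hgt μ = 0 then 1 else 0 := by
      intro μ hμ
      by_cases h0 : hgt μ = 0
      · simp [h0]
      · have := hgtle μ hμ
        rw [if_neg h0]
        exact Nat.choose_eq_zero_of_lt (by omega)
    rw [Finset.sum_congr rfl hterm]
    have hsf : (∑ x ∈ B, if hgt x = 0 then 1 else 0) = (B.filter fun x => hgt x = 0).card := by
      rw [Finset.card_filter]
    rw [hsf]
    have hfil : B.filter (fun x => hgt x = 0) = {fun _ => (0 : ℝ)} := by
      ext μ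
      simp only [Finset.mem_filter, Finset.mem_singleton]
      constructor
      · rintro ⟨hμ, h0⟩
        have hsum0 : ∑ j, μ j = 0 := by
          have := hgtcast μ hμ
          rw [h0] at this
          exact_mod_cast this.symm
        obtain ⟨hb, -, -⟩ := (hmemB μ).1 hμ
        funext j
        exact (Finset.sum_eq_zero_iff_of_nonneg fun j _ => (hb j).1).1 hsum0 j
          (Finset.mem_univ j)
      · rintro rfl
        refine ⟨(hmemB _).2 ⟨fun j => ⟨le_refl 0, one_pos⟩, ⟨0, by simp⟩, fun i => ⟨0, by simp⟩⟩, ?_⟩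
        simp [hhgt]
    rw [hfil, Finset.card_singleton]

lemma aux_shift (f : ℕ → ℤ) (c : ℕ) :
    Δ_[1] (fun t => f (t + c)) = fun t => (Δ_[1] f) (t + c) := by
  funext t
  simp only [fwdDiff]
  congr 2
  omega

lemma aux_shift_iter (f : ℕ → ℤ) (c m : ℕ) :
    (Δ_[(1 : ℕ)])^[m] (fun t => f (t + c)) = fun t => ((Δ_[(1 : ℕ)])^[m] f) (t + c) := by
  induction m generalizing f with
  | zero => rfl
  | succ m ih =>
    rw [Function.iterate_succ_apply, Function.iterate_succ_apply, aux_shift, ih]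

lemma aux_iter_zero (c e : ℕ) :
    (Δ_[(1 : ℕ)])^[e + 1] (fun t : ℕ => ((t + c).choose e : ℤ)) = fun _ => 0 := by
  have h1 : (fun t : ℕ => ((t + c).choose e : ℤ))
      = fun t => (fun x : ℕ => (x.choose e : ℤ)) (t + c) := rfl
  rw [h1, aux_shift_iter (fun x : ℕ => (x.choose e : ℤ)) c (e + 1), Function.iterate_succ_apply']
  have h2 : (Δ_[(1 : ℕ)])^[e] (fun x : ℕ => (x.choose e : ℤ)) = fun x => (x.choose 0 : ℤ) := by
    simpa using fwdDiff_iter_choose 0 e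
  rw [h2]
  have h3 : (fun x : ℕ => ((x.choose 0 : ℤ))) = fun _ => (1 : ℤ) := by funext x; simp
  rw [h3, fwdDiff_const]

theorem stmt10 (n d : ℕ) (v : Fin (d + 1) → (Fin n → ℝ))
    (hv : AffineIndependent ℝ v) (hint : ∀ j i, ∃ m : ℤ, v j i = m)
    (ℓ : ℕ → ℕ) (hℓ0 : ℓ 0 = 1)
    (hℓ : ∀ t : ℕ, 0 < t → ℓ t = latticeCount ((t : ℝ) • convexHull ℝ (Set.range v))) :
    ∀ t : ℕ, (ℓ (t + d + 1) : ℤ) =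
      ∑ k ∈ Finset.range (d + 1), (-1 : ℤ) ^ (d - k) * (d + 1).choose k * ℓ (t + k) := by
  obtain ⟨B, h, hle, hpos, h0⟩ := aux_count n d v hv hint
  have hform : ∀ t : ℕ, (ℓ t : ℤ) = ∑ μ ∈ B, ((t + (d - h μ)).choose d : ℤ) := by
    intro t
    rcases Nat.eq_zero_or_pos t with rfl | ht
    · rw [hℓ0]
      have he : ∀ μ ∈ B, ((0 + (d - h μ)).choose d : ℤ) = (((d - h μ).choose d : ℕ) : ℤ) := by
        intro μ _
        norm_num
      rw [Finset.sum_congr rfl he, ← Nat.cast_sum, h0]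
    · rw [hℓ t ht, hpos t ht, Nat.cast_sum]
      apply Finset.sum_congr rfl
      intro μ hμ
      have := hle μ hμ
      have e : t + d - h μ = t + (d - h μ) := by omega
      rw [e]
  have hfun : (fun t : ℕ => (ℓ t : ℤ))
      = ∑ μ ∈ B, (fun t : ℕ => ((t + (d - h μ)).choose d : ℤ)) := by
    funext t
    rw [Finset.sum_apply]
    exact hform t
  have hzero : (Δ_[(1 : ℕ)])^[d + 1] (fun t : ℕ => (ℓ t : ℤ)) = fun _ => 0 := by
    rw [hfun, fwdDiff_iter_finset_sum]
    funext t
    rw [Finset.sum_apply]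
    apply Finset.sum_eq_zero
    intro μ _
    rw [aux_iter_zero (d - h μ) d]
  intro t
  have key := fwdDiff_iter_eq_sum_shift (1 : ℕ) (fun t : ℕ => (ℓ t : ℤ)) (d + 1) t
  rw [hzero] at key
  simp only [smul_eq_mul, mul_one] at key
  rw [Finset.sum_range_succ] at key
  simp only [Nat.sub_self, pow_zero, Nat.choose_self, Nat.cast_one, one_mul] at key
  have hsgn : ∑ k ∈ Finset.range (d + 1), (-1 : ℤ) ^ (d + 1 - k) * ((d + 1).choose k) * ℓ (t + k)
      = -∑ k ∈ Finset.range (d + 1), (-1 : ℤ) ^ (d - k) * ((d + 1).choose k) * ℓ (t + k) := by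
    rw [← Finset.sum_neg_distrib]
    apply Finset.sum_congr rfl
    intro k hk
    rw [Finset.mem_range] at hk
    have e : d + 1 - k = (d - k) + 1 := by omega
    rw [e, pow_succ]
    ring
  rw [hsgn] at key
  have e2 : t + d + 1 = t + (d + 1) := by omega
  rw [e2]
  linarith [key]
end

section
/- Let P be a simplex with vertices v₀,…,v_d ∈ ℝⁿ, and let t be an integer with 0 > t > −d−1. Define Q_j = (t+d)·P + v_j and Q = ⋃_j Q_j. Then (t+d+1)·P \ Q = { ∑ a_i v_i : 0 ≤ a_i < 1 for all i, ∑ a_i = t+d+1 }. -/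
open Pointwise

lemma mem_hull_iff {n m : ℕ} (v : Fin m → (Fin n → ℝ)) (x : Fin n → ℝ) :
    x ∈ convexHull ℝ (Set.range v) ↔
      ∃ w : Fin m → ℝ, (∀ i, 0 ≤ w i) ∧ (∑ i, w i) = 1 ∧ x = ∑ i, w i • v i := by
  rw [convexHull_range_eq_exists_affineCombination]
  constructor
  · rintro ⟨s, w, hw₀, hw₁, rfl⟩
    refine ⟨fun i => if i ∈ s then w i else 0,
      fun i => by beta_reduce; split_ifs with h; exacts [hw₀ i h, le_rfl], ?_, ?_⟩
    · rw [← hw₁, Finset.sum_ite_mem, Finset.univ_inter]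
    · rw [s.affineCombination_eq_linear_combination v w hw₁]
      simp only [ite_smul, zero_smul, Finset.sum_ite_mem, Finset.univ_inter]
  · rintro ⟨w, hw₀, hw₁, rfl⟩
    exact ⟨Finset.univ, w, fun i _ => hw₀ i, hw₁,
      (Finset.univ.affineCombination_eq_linear_combination v w hw₁)⟩

lemma mem_smul_hull_iff {n m : ℕ} (hm : 0 < m) (v : Fin m → (Fin n → ℝ)) {r : ℝ} (hr : 0 ≤ r)
    (x : Fin n → ℝ) :
    x ∈ r • convexHull ℝ (Set.range v) ↔
      ∃ a : Fin m → ℝ, (∀ i, 0 ≤ a i) ∧ (∑ i, a i) = r ∧ x = ∑ i, a i • v i := by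
  rcases eq_or_lt_of_le hr with rfl | hr
  · have hne : (convexHull ℝ (Set.range v)).Nonempty :=
      ⟨v ⟨0, hm⟩, subset_convexHull ℝ _ (Set.mem_range_self _)⟩
    rw [Set.zero_smul_set hne]
    constructor
    · intro hx
      rw [Set.mem_zero] at hx
      subst hx
      exact ⟨0, fun i => le_rfl, by simp, by simp⟩
    · rintro ⟨a, ha₀, ha₁, rfl⟩
      have hz : ∀ i ∈ Finset.univ, a i = 0 := by
        rw [← Finset.sum_eq_zero_iff_of_nonneg (fun i _ => ha₀ i)]; exact ha₁
      rw [Set.mem_zero, Finset.sum_eq_zero fun i hi => by rw [hz i hi, zero_smul]]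
  · constructor
    · rintro ⟨y, hy, rfl⟩
      rw [mem_hull_iff] at hy
      obtain ⟨w, hw₀, hw₁, rfl⟩ := hy
      refine ⟨fun i => r * w i, fun i => mul_nonneg hr.le (hw₀ i), by
        rw [← Finset.mul_sum, hw₁, mul_one], ?_⟩
      show r • (∑ i, w i • v i) = _
      rw [Finset.smul_sum]
      exact Finset.sum_congr rfl fun i _ => by rw [smul_smul]
    · rintro ⟨a, ha₀, ha₁, rfl⟩
      refine ⟨∑ i, (a i / r) • v i, ?_, ?_⟩
      · rw [mem_hull_iff]
        exact ⟨fun i => a i / r, fun i => div_nonneg (ha₀ i) hr.le,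
          by rw [← Finset.sum_div, ha₁, div_self hr.ne'], rfl⟩
      · show r • (∑ i, (a i / r) • v i) = _
        rw [Finset.smul_sum]
        exact Finset.sum_congr rfl fun i _ => by
          rw [smul_smul]; congr 1; field_simp

theorem stmt15 (n d : ℕ) (v : Fin (d + 1) → (Fin n → ℝ)) (hv : AffineIndependent ℝ v)
    (t : ℤ) (ht0 : t < 0) (ht1 : -(d : ℤ) - 1 < t) :
    (((t : ℝ) + d + 1) • convexHull ℝ (Set.range v)) \
        (⋃ j, v j +ᵥ (((t : ℝ) + d) • convexHull ℝ (Set.range v))) =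
      {x | ∃ a : Fin (d + 1) → ℝ, (∀ i, 0 ≤ a i ∧ a i < 1) ∧
        (∑ i, a i) = (t : ℝ) + d + 1 ∧ x = ∑ i, a i • v i} := by
  have htd : -(d : ℤ) ≤ t := by omega
  have hr0 : (0 : ℝ) ≤ (t : ℝ) + d := by
    have : (-(d : ℝ)) ≤ (t : ℝ) := by exact_mod_cast htd
    linarith
  have hs0 : (0 : ℝ) ≤ (t : ℝ) + d + 1 := by linarith
  -- uniqueness of representations
  have uniq : ∀ a b : Fin (d + 1) → ℝ, (∑ i, a i) = (∑ i, b i) →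
      (∑ i, a i • v i) = (∑ i, b i • v i) → a = b := by
    intro a b hsum hvec
    funext i
    have h := affineIndependent_iff.mp hv Finset.univ (a - b) ?_ ?_ i (Finset.mem_univ i)
    · have : a i - b i = 0 := h
      linarith
    · simp only [Pi.sub_apply, Finset.sum_sub_distrib, hsum, sub_self]
    · simp only [Pi.sub_apply, sub_smul, Finset.sum_sub_distrib, hvec, sub_self]
  ext x
  simp only [Set.mem_diff, Set.mem_iUnion, Set.mem_setOf_eq,
    mem_smul_hull_iff (Nat.succ_pos d) v hs0, not_exists]
  have hQ : ∀ j : Fin (d + 1), x ∈ v j +ᵥ (((t : ℝ) + d) • convexHull ℝ (Set.range v)) ↔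
      ∃ c : Fin (d + 1) → ℝ, (∀ i, 0 ≤ c i) ∧ (∑ i, c i) = (t : ℝ) + d ∧
        x = v j + ∑ i, c i • v i := by
    intro j
    rw [Set.mem_vadd_set_iff_neg_vadd_mem, mem_smul_hull_iff (Nat.succ_pos d) v hr0]
    constructor
    · rintro ⟨c, hc₀, hc₁, hc₂⟩
      refine ⟨c, hc₀, hc₁, ?_⟩
      have : (-(v j)) + x = ∑ i, c i • v i := hc₂
      rw [← this]; abel
    · rintro ⟨c, hc₀, hc₁, rfl⟩
      exact ⟨c, hc₀, hc₁, by show -(v j) + _ = _; abel⟩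
  constructor
  · rintro ⟨⟨a, ha₀, ha₁, rfl⟩, hnot⟩
    refine ⟨a, fun i => ⟨ha₀ i, ?_⟩, ha₁, rfl⟩
    by_contra hge
    push_neg at hge
    apply hnot i
    rw [hQ i]
    refine ⟨fun k => a k - if k = i then 1 else 0, fun k => ?_, ?_, ?_⟩
    · by_cases hk : k = i <;> simp [hk, ha₀ k, hge]
    · simp [Finset.sum_sub_distrib, ha₁]
    · rw [show ∑ k, (a k - if k = i then (1:ℝ) else 0) • v k
          = ∑ k, a k • v k - ∑ k, (if k = i then (1:ℝ) else 0) • v k by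
        rw [← Finset.sum_sub_distrib]; exact Finset.sum_congr rfl fun k _ => sub_smul _ _ _]
      simp
  · rintro ⟨a, ha, ha₁, rfl⟩
    refine ⟨⟨a, fun i => (ha i).1, ha₁, rfl⟩, fun j hj => ?_⟩
    rw [hQ j] at hj
    obtain ⟨c, hc₀, hc₁, hc₂⟩ := hj
    have hb : (∑ i, a i • v i) = ∑ i, (c i + if i = j then 1 else 0) • v i := by
      rw [hc₂, show ∑ i, (c i + if i = j then (1:ℝ) else 0) • v i
          = ∑ i, c i • v i + ∑ i, (if i = j then (1:ℝ) else 0) • v i by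
        rw [← Finset.sum_add_distrib]; exact Finset.sum_congr rfl fun i _ => add_smul _ _ _]
      simp [add_comm]
    have heq : a = fun i => c i + if i = j then 1 else 0 := by
      apply uniq _ _ _ hb
      simp [Finset.sum_add_distrib, hc₁, ha₁]
    have : a j = c j + 1 := by rw [heq]; simp
    have := (ha j).2
    have := hc₀ j
    linarith
end
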